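/- Let κ ∈ ℝ, α ≥ 0, q ∈ (0,1) and ψ ≥ 0. If (q,ψ) solves the fixed-point relations ψ = R_κ(q,α) and q = P(ψ), then α ∫ 𝓔((κ − q^{1/2}z)/√(1−q)) · ((κ − q^{−1/2}z)/√(1−q)) φ(z) dz = ψ(1−q). -/

import Mathlib

open MeasureTheory Real Set Filter

noncomputable section

/-- The standard gaussian density `φ(x) = exp(-x²/2)/√(2π)`. -/
def gphi (x : ℝ) : ℝ := Real.exp (-x ^ 2 / 2) / Real.sqrt (2 * Real.pi)

/-- The complementary gaussian distribution function `Φ̄(x) = ∫_x^∞ φ(u) du`. -/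
def Phibar (x : ℝ) : ℝ := ∫ u in Set.Ioi x, gphi u

/-- `𝓔(x) = φ(x) / Φ̄(x)`. -/
def gaussE (x : ℝ) : ℝ := gphi x / Phibar x

/-- `F_q(x) = 𝓔((κ - x)/√(1-q)) / √(1-q)` (with threshold `κ`). -/
def Fq (κ q x : ℝ) : ℝ := gaussE ((κ - x) / Real.sqrt (1 - q)) / Real.sqrt (1 - q)

/-- `P(ψ) = ∫ tanh(√ψ z)² φ(z) dz`. -/
def Pfun (ψ : ℝ) : ℝ := ∫ z : ℝ, Real.tanh (Real.sqrt ψ * z) ^ 2 * gphi z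

/-- `R_κ(q, α) = α ∫ F_q(√q z)² φ(z) dz`. -/
def Rfun (κ q α : ℝ) : ℝ := α * ∫ z : ℝ, Fq κ q (Real.sqrt q * z) ^ 2 * gphi z

/-- `𝒢_κ(α, q, ψ)`. -/
def Gfun (κ α q ψ : ℝ) : ℝ :=
  -(ψ * (1 - q)) / 2 + (∫ z : ℝ, Real.log (2 * Real.cosh (Real.sqrt ψ * z)) * gphi z)
    + α * ∫ z : ℝ, Real.log (Phibar ((κ - Real.sqrt q * z) / Real.sqrt (1 - q))) * gphi z

def alphaLB : ℝ := 0.833078599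
def alphaUB : ℝ := 0.833078600
def qLB : ℝ := 0.56394907949
def qLU : ℝ := 0.56394907950
def qUL : ℝ := 0.56394908029
def qUB : ℝ := 0.56394908030
def psiLB : ℝ := 2.5763513100
def psiLU : ℝ := 2.5763513103
def psiUL : ℝ := 2.5763513221
def psiUB : ℝ := 2.5763513224


lemma gphi_pos (x : ℝ) : 0 < gphi x :=
  div_pos (Real.exp_pos _) (Real.sqrt_pos.2 (by positivity))

lemma gphi_cont : Continuous gphi := by
  unfold gphi; fun_prop

lemma gphi_integrable : Integrable gphi := by
  have h : Integrable (fun x : ℝ => Real.exp (-(1/2 : ℝ) * x ^ 2)) :=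
    integrable_exp_neg_mul_sq (by norm_num)
  have := h.div_const (Real.sqrt (2 * Real.pi))
  refine this.congr (Filter.Eventually.of_forall fun x => ?_)
  simp [gphi]; ring_nf

lemma gphi_hasDerivAt (x : ℝ) : HasDerivAt gphi (-x * gphi x) x := by
  have h1 : HasDerivAt (fun x : ℝ => -x ^ 2 / 2) (-x) x := by
    have := ((hasDerivAt_pow 2 x).neg).div_const 2
    refine this.congr_deriv ?_; push_cast; ring
  have h2 := (h1.exp).div_const (Real.sqrt (2 * Real.pi))
  refine h2.congr_deriv ?_; simp [gphi]; ring

lemma integrable_dom : Integrable (fun z : ℝ => (1 + |z|) ^ 2 * gphi z) := by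
  have hInt : Integrable (fun z : ℝ =>
      (4 * Real.exp 1 / Real.sqrt (2 * Real.pi)) * Real.exp (-(1/4 : ℝ) * z ^ 2)) :=
    (integrable_exp_neg_mul_sq (by norm_num)).const_mul _
  refine hInt.mono' ?_ (Filter.Eventually.of_forall fun z => ?_)
  · exact (((continuous_const.add continuous_abs).pow 2).mul gphi_cont).aestronglyMeasurable
  · have hz : (0:ℝ) ≤ |z| := abs_nonneg z
    have hsq : z ^ 2 = |z| ^ 2 := (sq_abs z).symm
    have h1 : (1 + |z|) ^ 2 ≤ 4 * Real.exp |z| := by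
      nlinarith [Real.quadratic_le_exp_of_nonneg hz]
    have h2 : Real.exp (|z| - |z|^2/4) ≤ Real.exp 1 := by
      apply Real.exp_le_exp.2; nlinarith [sq_nonneg (|z| - 2)]
    have hexp : Real.exp |z| * Real.exp (-z^2/2)
        = Real.exp (|z| - |z|^2/4) * Real.exp (-(1/4:ℝ)*z^2) := by
      rw [← Real.exp_add, ← Real.exp_add]; congr 1; rw [hsq]; ring
    have hb : (1 + |z|) ^ 2 * Real.exp (-z ^ 2 / 2) ≤
        4 * Real.exp 1 * Real.exp (-(1/4 : ℝ) * z ^ 2) := by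
      calc (1 + |z|) ^ 2 * Real.exp (-z ^ 2 / 2)
          ≤ 4 * Real.exp |z| * Real.exp (-z^2/2) := by
            apply mul_le_mul_of_nonneg_right h1 (Real.exp_pos _).le
        _ = 4 * (Real.exp (|z| - |z|^2/4)) * Real.exp (-(1/4:ℝ)*z^2) := by
            rw [mul_assoc, hexp, ← mul_assoc]
        _ ≤ 4 * Real.exp 1 * Real.exp (-(1/4:ℝ)*z^2) := by
            apply mul_le_mul_of_nonneg_right (by linarith) (Real.exp_pos _).le
    have hnorm : ‖(1 + |z|) ^ 2 * gphi z‖ = (1 + |z|) ^ 2 * gphi z := by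
      rw [Real.norm_eq_abs, abs_of_nonneg (mul_nonneg (by positivity) (gphi_pos z).le)]
    rw [hnorm]
    unfold gphi
    calc (1 + |z|)^2 * (Real.exp (-z^2/2) / Real.sqrt (2*Real.pi))
        = (1 + |z|)^2 * Real.exp (-z^2/2) / Real.sqrt (2*Real.pi) := by ring
      _ ≤ 4 * Real.exp 1 * Real.exp (-(1/4:ℝ)*z^2) / Real.sqrt (2*Real.pi) := by
          gcongr
      _ = 4 * Real.exp 1 / Real.sqrt (2*Real.pi) * Real.exp (-(1/4:ℝ)*z^2) := by ring

lemma Phibar_split {a b : ℝ} (h : a ≤ b) :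
    Phibar a = (∫ u in Set.Ioc a b, gphi u) + Phibar b := by
  unfold Phibar
  rw [← Set.Ioc_union_Ioi_eq_Ioi h,
    MeasureTheory.setIntegral_union Set.Ioc_disjoint_Ioi_same measurableSet_Ioi
      gphi_integrable.integrableOn gphi_integrable.integrableOn]

lemma Phibar_antitone : Antitone Phibar := by
  intro a b h
  rw [Phibar_split h]
  have : 0 ≤ ∫ u in Set.Ioc a b, gphi u :=
    MeasureTheory.setIntegral_nonneg measurableSet_Ioc fun x _ => (gphi_pos x).le
  linarith

lemma Phibar_pos (x : ℝ) : 0 < Phibar x := by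
  rw [Phibar_split (by linarith : x ≤ x + 1)]
  have h1 : 0 < ∫ u in Set.Ioc x (x+1), gphi u := by
    rw [← intervalIntegral.integral_of_le (by linarith : x ≤ x + 1)]
    exact intervalIntegral.intervalIntegral_pos_of_pos
      (gphi_integrable.intervalIntegrable) gphi_pos (by linarith)
  have h2 : 0 ≤ Phibar (x+1) :=
    MeasureTheory.setIntegral_nonneg measurableSet_Ioi fun x _ => (gphi_pos x).le
  linarith

lemma Phibar_hasDerivAt (x : ℝ) : HasDerivAt Phibar (-gphi x) x := by
  have key : ∀ y : ℝ, Phibar y = Phibar 0 - ∫ t in (0:ℝ)..y, gphi t := by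
    intro y
    rcases le_total 0 y with h | h
    · rw [intervalIntegral.integral_of_le h, Phibar_split h]; ring
    · rw [intervalIntegral.integral_symm, intervalIntegral.integral_of_le h,
        Phibar_split h]; ring
  have hd : HasDerivAt (fun y => ∫ t in (0:ℝ)..y, gphi t) (gphi x) x :=
    intervalIntegral.integral_hasDerivAt_right (gphi_integrable.intervalIntegrable)
      (gphi_cont.stronglyMeasurableAtFilter _ _) gphi_cont.continuousAt
  have := (hasDerivAt_const x (Phibar 0)).sub hd
  simp only [zero_sub] at this
  exact (this.congr_deriv rfl).congr_of_eventuallyEq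
    (Filter.Eventually.of_forall fun y => (key y))

lemma gphi_total : ∫ x : ℝ, gphi x = 1 := by
  unfold gphi
  rw [MeasureTheory.integral_div]
  have : ∫ x : ℝ, Real.exp (-x ^ 2 / 2) = Real.sqrt (2 * Real.pi) := by
    have h := integral_gaussian (1/2)
    simp only [show ∀ x : ℝ, -(1/2 : ℝ) * x ^ 2 = -x ^ 2 / 2 from fun x => by ring] at h
    rw [h]; rw [show Real.pi / (1/2) = 2 * Real.pi by ring]
  rw [this, div_self (ne_of_gt (Real.sqrt_pos.2 (by positivity)))]

lemma Phibar_tendsto_atTop : Tendsto Phibar atTop (nhds 0) := by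
  have key : ∀ y : ℝ, Phibar y = Phibar 0 - ∫ t in (0:ℝ)..y, gphi t := by
    intro y
    rcases le_total 0 y with h | h
    · rw [intervalIntegral.integral_of_le h, Phibar_split h]; ring
    · rw [intervalIntegral.integral_symm, intervalIntegral.integral_of_le h,
        Phibar_split h]; ring
  have h1 : Tendsto (fun y => ∫ t in (0:ℝ)..y, gphi t) atTop (nhds (Phibar 0)) :=
    intervalIntegral_tendsto_integral_Ioi 0 gphi_integrable.integrableOn tendsto_id
  have h2 : Tendsto (fun y => Phibar 0 - ∫ t in (0:ℝ)..y, gphi t) atTop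
      (nhds (Phibar 0 - Phibar 0)) := tendsto_const_nhds.sub h1
  simp only [sub_self] at h2
  exact h2.congr fun y => (key y).symm

lemma Phibar_zero : Phibar 0 = 1/2 := by
  have heven : ∀ x : ℝ, gphi (-x) = gphi x := fun x => by unfold gphi; rw [neg_pow]; norm_num
  have hsymm : ∫ u in Set.Iic (0:ℝ), gphi u = Phibar 0 := by
    calc ∫ u in Set.Iic (0:ℝ), gphi u
        = ∫ u in Set.Iic (0:ℝ), gphi (-u) :=
          MeasureTheory.integral_congr_ae (Filter.Eventually.of_forall fun u => (heven u).symm)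
      _ = ∫ u in Set.Ioi (-(0:ℝ)), gphi u := integral_comp_neg_Iic 0 gphi
      _ = Phibar 0 := by norm_num [Phibar]
  have hsplit : (∫ u in Set.Iic (0:ℝ), gphi u) + ∫ u in Set.Ioi (0:ℝ), gphi u = 1 := by
    rw [intervalIntegral.integral_Iic_add_Ioi gphi_integrable.integrableOn
      gphi_integrable.integrableOn, gphi_total]
  rw [hsymm] at hsplit
  rw [show (∫ u in Set.Ioi (0:ℝ), gphi u) = Phibar 0 from rfl] at hsplit
  linarith

lemma gphi_tendsto_atTop : Tendsto gphi atTop (nhds 0) := by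
  unfold gphi
  have h1 : Tendsto (fun x : ℝ => -x ^ 2 / 2) atTop atBot := by
    apply Tendsto.atBot_div_const (by norm_num)
    exact tendsto_neg_atBot_iff.mpr (tendsto_pow_atTop (by norm_num))
  have := (Real.tendsto_exp_atBot.comp h1).div_const (Real.sqrt (2 * Real.pi))
  simpa using this

lemma Phibar_mill {x : ℝ} (hx : 0 ≤ x) : gphi x / (x + 1) ≤ Phibar x := by
  set H : ℝ → ℝ := fun y => Phibar y - gphi y / (y + 1) with hH
  have hderiv : ∀ y ∈ Set.Ici (0:ℝ), HasDerivAt H (-y * gphi y / (y+1)^2) y := by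
    intro y hy
    have hy1 : y + 1 ≠ 0 := by simp at hy; positivity
    have h2 : HasDerivAt (fun y : ℝ => gphi y / (y + 1))
        ((-y * gphi y * (y+1) - gphi y * 1) / (y+1)^2) y :=
      (gphi_hasDerivAt y).div ((hasDerivAt_id y).add_const 1) hy1
    have := (Phibar_hasDerivAt y).sub h2
    refine this.congr_deriv ?_
    field_simp
    ring
  have hanti : AntitoneOn H (Set.Ici (0:ℝ)) := by
    apply antitoneOn_of_deriv_nonpos (convex_Ici 0)
    · apply ContinuousOn.sub
      · exact fun y hy => ((Phibar_hasDerivAt y).continuousAt).continuousWithinAt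
      · apply ContinuousOn.div (gphi_cont.continuousOn)
          (by fun_prop)
        intro y hy; simp at hy; positivity
    · intro y hy
      rw [interior_Ici] at hy
      exact (hderiv y (Set.mem_Ici.2 (le_of_lt hy))).differentiableAt.differentiableWithinAt
    · intro y hy
      rw [interior_Ici] at hy
      rw [((hderiv y (Set.mem_Ici.2 (le_of_lt hy))).deriv)]
      have hyp : 0 < y := hy
      have := gphi_pos y
      apply div_nonpos_of_nonpos_of_nonneg
      · nlinarith
      · positivity
  have hlim : Tendsto H atTop (nhds 0) := by
    have h2 : Tendsto (fun y : ℝ => gphi y / (y + 1)) atTop (nhds 0) := by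
      apply squeeze_zero' (Filter.eventually_atTop.2
        ⟨0, fun y hy => div_nonneg (gphi_pos y).le (by linarith)⟩)
        (Filter.eventually_atTop.2 ⟨0, fun y hy => ?_⟩) gphi_tendsto_atTop
      rw [div_le_iff₀ (by positivity)]
      nlinarith [gphi_pos y]
    simpa using Phibar_tendsto_atTop.sub h2
  have hge : 0 ≤ H x := by
    apply le_of_tendsto hlim
    filter_upwards [Filter.eventually_ge_atTop x] with y hy
    exact hanti hx (le_trans hx hy) hy
  simpa [hH] using hge

lemma Phibar_cont : Continuous Phibar :=
  continuous_iff_continuousAt.2 fun x => (Phibar_hasDerivAt x).continuousAt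

lemma gaussE_cont : Continuous gaussE :=
  gphi_cont.div Phibar_cont fun x => (Phibar_pos x).ne'

lemma gaussE_nonneg (x : ℝ) : 0 ≤ gaussE x :=
  div_nonneg (gphi_pos x).le (Phibar_pos x).le

lemma gaussE_le (x : ℝ) : gaussE x ≤ |x| + 2 := by
  have hP := Phibar_pos x
  rcases le_or_gt x 0 with h | h
  · have h1 : gphi x ≤ 1 := by
      unfold gphi
      rw [div_le_one (Real.sqrt_pos.2 (by positivity))]
      have : Real.exp (-x^2/2) ≤ 1 := Real.exp_le_one_iff.2 (by nlinarith [sq_nonneg x])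
      have h2 : (1:ℝ) ≤ Real.sqrt (2*Real.pi) := by
        rw [show (1:ℝ) = Real.sqrt 1 by simp]
        exact Real.sqrt_le_sqrt (by nlinarith [Real.pi_gt_three])
      linarith
    have h2 : (1/2 : ℝ) ≤ Phibar x := by
      rw [← Phibar_zero]; exact Phibar_antitone h
    unfold gaussE
    rw [div_le_iff₀ (Phibar_pos x)]
    nlinarith [abs_nonneg x]
  · have hmill := Phibar_mill h.le
    unfold gaussE
    rw [div_le_iff₀ (Phibar_pos x)]
    have h1 : gphi x ≤ (x+1) * Phibar x := by
      rw [div_le_iff₀ (by linarith : (0:ℝ) < x + 1)] at hmill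
      linarith [hmill]
    have : x + 1 ≤ |x| + 2 := by rw [abs_of_pos h]; linarith
    nlinarith [gphi_pos x, Phibar_pos x]

lemma gaussE_hasDerivAt (x : ℝ) : HasDerivAt gaussE (gaussE x * (gaussE x - x)) x := by
  have h := (gphi_hasDerivAt x).div (Phibar_hasDerivAt x) (Phibar_pos x).ne'
  refine h.congr_deriv ?_
  have hP : Phibar x ≠ 0 := (Phibar_pos x).ne'
  unfold gaussE
  field_simp
  ring

lemma tendsto_linear_gphi_atTop :
    Tendsto (fun t : ℝ => (1+t) * Real.exp (-t^2/2) / Real.sqrt (2*Real.pi)) atTop (nhds 0) := by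
  have h10 : Tendsto (fun t : ℝ => (1+t) * Real.exp (-t)) atTop (nhds 0) := by
    have h1 := Real.tendsto_exp_neg_atTop_nhds_zero
    have h2 := tendsto_pow_mul_exp_neg_atTop_nhds_zero 1
    have := h1.add h2
    simp only [add_zero] at this
    refine this.congr fun t => ?_
    simp only [pow_one]; ring
  have key : Tendsto (fun t : ℝ => (1+t) * Real.exp (-t^2/2)) atTop (nhds 0) := by
    apply squeeze_zero' (Filter.eventually_atTop.2 ⟨0, fun t ht => by positivity⟩)
      (Filter.eventually_atTop.2 ⟨0, fun t ht => ?_⟩)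
      (by simpa using h10.const_mul (Real.exp (1/2)))
    have h3 : Real.exp (-t^2/2) ≤ Real.exp (1/2) * Real.exp (-t) := by
      rw [← Real.exp_add]
      apply Real.exp_le_exp.2
      nlinarith [sq_nonneg (t-1)]
    calc (1+t) * Real.exp (-t^2/2) ≤ (1+t) * (Real.exp (1/2) * Real.exp (-t)) :=
          mul_le_mul_of_nonneg_left h3 (by linarith)
      _ = Real.exp (1/2) * ((1+t) * Real.exp (-t)) := by ring
      _ = Real.exp (2⁻¹) * ((1+t) * Real.exp (-t)) := by norm_num
  simpa using key.div_const (Real.sqrt (2*Real.pi))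

lemma tendsto_linear_gphi (K : ℝ) (l : Filter ℝ) (hl : Tendsto (fun z : ℝ => |z|) l atTop) :
    Tendsto (fun z : ℝ => K * ((1+|z|) * gphi z)) l (nhds 0) := by
  have h := (tendsto_linear_gphi_atTop.comp hl).const_mul K
  simp only [mul_zero] at h
  refine h.congr fun z => ?_
  simp only [Function.comp]
  unfold gphi
  rw [show |z|^2 = z^2 from sq_abs z]
  ring

def uf (κ q z : ℝ) : ℝ := (κ - Real.sqrt q * z) / Real.sqrt (1 - q)
def vf (κ q z : ℝ) : ℝ := (κ - z / Real.sqrt q) / Real.sqrt (1 - q)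

section core
variable {κ q : ℝ}

lemma hz_id (hq0 : 0 < q) (hq1 : q < 1) (z : ℝ) :
    z = Real.sqrt q / Real.sqrt (1-q) * (uf κ q z - vf κ q z) := by
  have hsq : (0:ℝ) < Real.sqrt q := Real.sqrt_pos.2 hq0
  have hs1 : (0:ℝ) < Real.sqrt (1-q) := Real.sqrt_pos.2 (by linarith)
  have hsqsq : Real.sqrt q ^ 2 = q := Real.sq_sqrt hq0.le
  have hs1sq : Real.sqrt (1-q) ^ 2 = 1 - q := Real.sq_sqrt (by linarith)
  unfold uf vf
  field_simp
  linear_combination z * hs1sq + z * hsqsq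
end core

section main
variable {κ q : ℝ}

lemma bounds_Kpos (hq0 : 0 < q) (hq1 : q < 1) :
    0 < |κ|/Real.sqrt (1-q) + Real.sqrt q/Real.sqrt (1-q)
      + (1/Real.sqrt q)/Real.sqrt (1-q) + 2 := by
  have hsq : (0:ℝ) < Real.sqrt q := Real.sqrt_pos.2 hq0
  have hs1 : (0:ℝ) < Real.sqrt (1-q) := Real.sqrt_pos.2 (by linarith)
  positivity

lemma uf_bound (hq0 : 0 < q) (hq1 : q < 1) (z : ℝ) :
    |uf κ q z| ≤ |κ|/Real.sqrt (1-q) + Real.sqrt q/Real.sqrt (1-q) * |z| := by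
  have hsq : (0:ℝ) < Real.sqrt q := Real.sqrt_pos.2 hq0
  have hs1 : (0:ℝ) < Real.sqrt (1-q) := Real.sqrt_pos.2 (by linarith)
  unfold uf
  rw [abs_div, abs_of_pos hs1]
  have h1 : |κ - Real.sqrt q * z| ≤ |κ| + Real.sqrt q * |z| := by
    calc |κ - Real.sqrt q * z| ≤ |κ| + |Real.sqrt q * z| := abs_sub _ _
      _ = |κ| + Real.sqrt q * |z| := by rw [abs_mul, abs_of_pos hsq]
  calc |κ - Real.sqrt q * z| / Real.sqrt (1-q)
      ≤ (|κ| + Real.sqrt q * |z|) / Real.sqrt (1-q) := by gcongr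
    _ = |κ|/Real.sqrt (1-q) + Real.sqrt q/Real.sqrt (1-q) * |z| := by ring

lemma vf_bound (hq0 : 0 < q) (hq1 : q < 1) (z : ℝ) :
    |vf κ q z| ≤ |κ|/Real.sqrt (1-q) + (1/Real.sqrt q)/Real.sqrt (1-q) * |z| := by
  have hsq : (0:ℝ) < Real.sqrt q := Real.sqrt_pos.2 hq0
  have hs1 : (0:ℝ) < Real.sqrt (1-q) := Real.sqrt_pos.2 (by linarith)
  unfold vf
  rw [abs_div, abs_of_pos hs1]
  have h1 : |κ - z / Real.sqrt q| ≤ |κ| + |z| / Real.sqrt q := by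
    calc |κ - z / Real.sqrt q| ≤ |κ| + |z / Real.sqrt q| := abs_sub _ _
      _ = |κ| + |z| / Real.sqrt q := by rw [abs_div, abs_of_pos hsq]
  calc |κ - z / Real.sqrt q| / Real.sqrt (1-q)
      ≤ (|κ| + |z| / Real.sqrt q) / Real.sqrt (1-q) := by gcongr
    _ = |κ|/Real.sqrt (1-q) + (1/Real.sqrt q)/Real.sqrt (1-q) * |z| := by ring

lemma key_identity (hq0 : 0 < q) (hq1 : q < 1) :
    (∫ z : ℝ, gaussE (uf κ q z) * vf κ q z * gphi z)
      = ∫ z : ℝ, gaussE (uf κ q z) ^ 2 * gphi z := by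
  have hsq : (0:ℝ) < Real.sqrt q := Real.sqrt_pos.2 hq0
  have hs1 : (0:ℝ) < Real.sqrt (1-q) := Real.sqrt_pos.2 (by linarith)
  set K : ℝ := |κ|/Real.sqrt (1-q) + Real.sqrt q/Real.sqrt (1-q)
      + (1/Real.sqrt q)/Real.sqrt (1-q) + 2 with hK
  have hK0 : 0 < K := bounds_Kpos hq0 hq1
  have ha : (0:ℝ) ≤ |κ|/Real.sqrt (1-q) := by positivity
  have hb : (0:ℝ) ≤ Real.sqrt q/Real.sqrt (1-q) := by positivity
  have hc : (0:ℝ) ≤ (1/Real.sqrt q)/Real.sqrt (1-q) := by positivity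
  -- pointwise bounds
  have hEb : ∀ z : ℝ, gaussE (uf κ q z) ≤ K * (1 + |z|) := by
    intro z
    have h1 := gaussE_le (uf κ q z)
    have h2 := uf_bound hq0 hq1 (κ := κ) z
    have hz := abs_nonneg z
    rw [hK]
    nlinarith [mul_nonneg ha hz, mul_nonneg hb hz, mul_nonneg hc hz]
  have hvb : ∀ z : ℝ, |vf κ q z| ≤ K * (1 + |z|) := by
    intro z
    have h2 := vf_bound hq0 hq1 (κ := κ) z
    have hz := abs_nonneg z
    rw [hK]
    nlinarith [mul_nonneg ha hz, mul_nonneg hb hz, mul_nonneg hc hz]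
  -- continuity
  have hcontE : Continuous (fun z => gaussE (uf κ q z)) := by
    apply gaussE_cont.comp; unfold uf; fun_prop
  have hcontv : Continuous (vf κ q) := by unfold vf; fun_prop
  -- integrability
  have intA : Integrable (fun z : ℝ => gaussE (uf κ q z) ^ 2 * gphi z) := by
    refine (integrable_dom.const_mul (K^2)).mono'
      ((hcontE.pow 2).mul gphi_cont).aestronglyMeasurable
      (Filter.Eventually.of_forall fun z => ?_)
    have hE0 := gaussE_nonneg (uf κ q z)
    have hg0 := gphi_pos z
    rw [Real.norm_eq_abs, abs_of_nonneg (by positivity)]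
    have h1 : gaussE (uf κ q z) ^ 2 ≤ (K * (1+|z|))^2 :=
      pow_le_pow_left₀ hE0 (hEb z) 2
    calc gaussE (uf κ q z) ^ 2 * gphi z ≤ (K * (1+|z|))^2 * gphi z :=
          mul_le_mul_of_nonneg_right h1 hg0.le
      _ = K^2 * ((1+|z|)^2 * gphi z) := by ring
  have intB : Integrable (fun z : ℝ => gaussE (uf κ q z) * vf κ q z * gphi z) := by
    refine (integrable_dom.const_mul (K^2)).mono'
      ((hcontE.mul hcontv).mul gphi_cont).aestronglyMeasurable
      (Filter.Eventually.of_forall fun z => ?_)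
    have hE0 := gaussE_nonneg (uf κ q z)
    have hg0 := gphi_pos z
    have hz := abs_nonneg z
    rw [Real.norm_eq_abs, abs_mul, abs_mul, abs_of_nonneg hE0, abs_of_pos hg0]
    have h1 : gaussE (uf κ q z) * |vf κ q z| ≤ (K * (1+|z|)) * (K * (1+|z|)) :=
      mul_le_mul (hEb z) (hvb z) (abs_nonneg _) (by positivity)
    calc gaussE (uf κ q z) * |vf κ q z| * gphi z
        ≤ (K * (1+|z|)) * (K * (1+|z|)) * gphi z :=
          mul_le_mul_of_nonneg_right h1 hg0.le
      _ = K^2 * ((1+|z|)^2 * gphi z) := by ring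
  -- the derivative
  set c0 : ℝ := Real.sqrt q / Real.sqrt (1-q) with hc0
  have hc00 : 0 < c0 := by positivity
  set G : ℝ → ℝ := fun z => gaussE (uf κ q z) * gphi z with hG
  set G' : ℝ → ℝ := fun z =>
    -c0 * (gaussE (uf κ q z) ^ 2 - gaussE (uf κ q z) * vf κ q z) * gphi z with hG'
  have hderiv : ∀ z : ℝ, HasDerivAt G (G' z) z := by
    intro z
    have hu' : HasDerivAt (fun z => uf κ q z) (-c0) z := by
      have h1 : HasDerivAt (fun z : ℝ => κ - Real.sqrt q * z) (-(Real.sqrt q)) z := by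
        simpa using ((hasDerivAt_id z).const_mul (Real.sqrt q)).const_sub κ
      have := h1.div_const (Real.sqrt (1-q))
      simpa [uf, hc0, neg_div] using this
    have hcomp := (gaussE_hasDerivAt (uf κ q z)).comp z hu'
    have hprod := hcomp.mul (gphi_hasDerivAt z)
    have hz := hz_id (κ := κ) hq0 hq1 z
    refine hprod.congr_deriv ?_
    simp only [Function.comp, hG']
    linear_combination -(gaussE (uf κ q z) * gphi z) * hz
  have intG' : Integrable G' := by
    refine ((intA.sub intB).const_mul (-c0)).congr
      (Filter.Eventually.of_forall fun z => ?_)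
    simp only [hG', Pi.sub_apply]; ring
  -- tendsto at infinity
  have htendK : ∀ (l : Filter ℝ), Tendsto (fun z : ℝ => |z|) l atTop →
      Tendsto G l (nhds 0) := by
    intro l hl
    refine squeeze_zero_norm (fun z => ?_) (tendsto_linear_gphi K l hl)
    have hg0 := gphi_pos z
    have hE0 := gaussE_nonneg (uf κ q z)
    rw [Real.norm_eq_abs, hG, abs_mul, abs_of_nonneg hE0, abs_of_pos hg0]
    calc gaussE (uf κ q z) * gphi z ≤ (K * (1+|z|)) * gphi z :=
          mul_le_mul_of_nonneg_right (hEb z) hg0.le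
      _ = K * ((1+|z|) * gphi z) := by ring
  have htop : Tendsto G atTop (nhds 0) := htendK atTop tendsto_abs_atTop_atTop
  have hbot : Tendsto G atBot (nhds 0) := htendK atBot tendsto_abs_atBot_atTop
  -- FTC
  have hIoi : ∫ z in Set.Ioi (0:ℝ), G' z = 0 - G 0 :=
    MeasureTheory.integral_Ioi_of_hasDerivAt_of_tendsto'
      (fun x _ => hderiv x) intG'.integrableOn htop
  have hIic : ∫ z in Set.Iic (0:ℝ), G' z = G 0 - 0 :=
    MeasureTheory.integral_Iic_of_hasDerivAt_of_tendsto'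
      (fun x _ => hderiv x) intG'.integrableOn hbot
  have htotal : ∫ z : ℝ, G' z = 0 := by
    rw [← intervalIntegral.integral_Iic_add_Ioi intG'.integrableOn intG'.integrableOn,
      hIoi, hIic]
    ring
  have hsplit : ∫ z : ℝ, G' z =
      -c0 * ((∫ z : ℝ, gaussE (uf κ q z) ^ 2 * gphi z)
        - ∫ z : ℝ, gaussE (uf κ q z) * vf κ q z * gphi z) := by
    rw [← MeasureTheory.integral_sub intA intB, ← MeasureTheory.integral_const_mul]
    congr 1; funext z; simp only [hG']; ring
  rw [htotal] at hsplit
  rcases mul_eq_zero.1 hsplit.symm with h9 | h9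
  · exact absurd h9 (neg_ne_zero.2 hc00.ne')
  · linarith

end main

/-- If `(q, ψ)` solves the fixed-point relations `ψ = R_κ(q, α)` and
`q = P(ψ)`, then `α ∫ 𝓔((κ - √q z)/√(1-q)) ((κ - z/√q)/√(1-q)) φ(z) dz = ψ(1-q)`. -/
theorem fixedPoint_integration_by_parts (κ α q ψ : ℝ) (hα : 0 ≤ α)
    (hq : q ∈ Set.Ioo (0 : ℝ) 1) (hψ : 0 ≤ ψ)
    (h1 : ψ = Rfun κ q α) (h2 : q = Pfun ψ) :
    α * ∫ z : ℝ, gaussE ((κ - Real.sqrt q * z) / Real.sqrt (1 - q))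
        * ((κ - z / Real.sqrt q) / Real.sqrt (1 - q)) * gphi z = ψ * (1 - q) := by
  obtain ⟨hq0, hq1⟩ := hq
  have hs1 : (0:ℝ) < Real.sqrt (1-q) := Real.sqrt_pos.2 (by linarith)
  have hs1sq : Real.sqrt (1-q) ^ 2 = 1 - q := Real.sq_sqrt (by linarith)
  have hkey := key_identity (κ := κ) hq0 hq1
  have hFq : (fun z : ℝ => Fq κ q (Real.sqrt q * z) ^ 2 * gphi z)
      = fun z : ℝ => (1-q)⁻¹ * (gaussE (uf κ q z) ^ 2 * gphi z) := by
    funext z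
    unfold Fq uf
    rw [div_pow, hs1sq]
    ring
  have hR : Rfun κ q α
      = α * ((1-q)⁻¹ * ∫ z : ℝ, gaussE (uf κ q z) ^ 2 * gphi z) := by
    unfold Rfun
    rw [hFq, MeasureTheory.integral_const_mul]
  have hne : (1:ℝ) - q ≠ 0 := by linarith
  show α * (∫ z : ℝ, gaussE (uf κ q z) * vf κ q z * gphi z) = ψ * (1-q)
  rw [hkey, h1, hR]
  field_simp
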